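/- For all nonnegative integers l and k such that either k < l or k - l is odd, the stiffness entry vanishes: F_{lk} = ∫_{-1}^{1} φ_k''(ξ) · (d²/dξ²)[ω(ξ) φ_l(ξ)] dξ = 0. That is, the only possibly nonzero entries of the stiffness matrix F occur for k = l, l+2, l+4, …. -/

import Mathlib

open MeasureTheory

/-- The Chebyshev weight `ω(ξ) = (1 - ξ²)^(-1/2)`. -/
noncomputable def chebW (ξ : ℝ) : ℝ := (1 - ξ ^ 2) ^ (-(1 : ℝ) / 2)

/-- The degree-`k` Chebyshev polynomial of the first kind, as a function `ℝ → ℝ`. -/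
noncomputable def chebT (k : ℕ) (ξ : ℝ) : ℝ := (Polynomial.Chebyshev.T ℝ k).eval ξ

/-- The weighted inner product `⟨f, g⟩_ω = ∫_{-1}^{1} f(ξ) g(ξ) ω(ξ) dξ`. -/
noncomputable def ipw (f g : ℝ → ℝ) : ℝ := ∫ ξ in (-1 : ℝ)..1, f ξ * g ξ * chebW ξ

/-- The basis functions
`φ_k(ξ) = T_k(ξ) - (2(k+2)/(k+3)) T_{k+2}(ξ) + ((k+1)/(k+3)) T_{k+4}(ξ)`. -/
noncomputable def phiFun (k : ℕ) (ξ : ℝ) : ℝ :=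
  chebT k ξ - (2 * ((k : ℝ) + 2) / ((k : ℝ) + 3)) * chebT (k + 2) ξ
    + (((k : ℝ) + 1) / ((k : ℝ) + 3)) * chebT (k + 4) ξ

/-- The stiffness entry `F_{lk} = ∫_{-1}^{1} φ_k''(ξ) · (d²/dξ²)[ω(ξ) φ_l(ξ)] dξ`. -/
noncomputable def stiff (l k : ℕ) : ℝ :=
  ∫ ξ in (-1 : ℝ)..1,
    deriv (deriv (phiFun k)) ξ * deriv (deriv (fun x => chebW x * phiFun l x)) ξ

open Polynomial Polynomial.Chebyshev

private lemma two_step {P : ℕ → Prop} (h0 : P 0) (h1 : P 1)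
    (ih : ∀ n, P n → P (n + 1) → P (n + 2)) : ∀ n, P n := by
  have key : ∀ n, P n ∧ P (n + 1) := by
    intro n
    induction n with
    | zero => exact ⟨h0, h1⟩
    | succ m hm => exact ⟨hm.2, ih m hm.1 hm.2⟩
  exact fun n => (key n).1

private lemma T_nat_cast (n : ℕ) : T ℝ ((n : ℤ) + 2) = 2 * X * T ℝ ((n+1 : ℕ) : ℤ) - T ℝ (n : ℤ) := by
  push_cast
  exact T_add_two ℝ n

private lemma T_eval_one : ∀ n : ℕ, (T ℝ (n : ℤ)).eval 1 = 1 := by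
  refine two_step ?_ ?_ ?_
  · simp [T_zero]
  · simp [T_one]
  · intro n h1 h2
    have : ((n : ℤ) + 2) = ((n + 2 : ℕ) : ℤ) := by push_cast; ring
    rw [← this, T_add_two]
    push_cast at *
    simp [h1, h2]
    norm_num

private lemma U_eval_one : ∀ n : ℕ, (U ℝ (n : ℤ)).eval 1 = (n : ℝ) + 1 := by
  refine two_step ?_ ?_ ?_
  · simp [U_zero]
  · simp [U_one]
    norm_num
  · intro n h1 h2
    have : ((n : ℤ) + 2) = ((n + 2 : ℕ) : ℤ) := by push_cast; ring
    rw [← this, U_add_two]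
    push_cast at *
    simp [h1, h2]; ring

private lemma T_comp_neg : ∀ n : ℕ, (T ℝ (n : ℤ)).comp (-X) = (-1 : ℝ[X])^n * T ℝ (n : ℤ) := by
  refine two_step ?_ ?_ ?_
  · simp [T_zero]
  · simp [T_one]
  · intro n h1 h2
    have e : ((n : ℤ) + 2) = ((n + 2 : ℕ) : ℤ) := by push_cast; ring
    rw [← e, T_add_two]
    push_cast at *
    simp only [sub_comp, mul_comp, X_comp, ofNat_comp, h1, h2]
    ring

private lemma U_comp_neg : ∀ n : ℕ, (U ℝ (n : ℤ)).comp (-X) = (-1 : ℝ[X])^n * U ℝ (n : ℤ) := by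
  refine two_step ?_ ?_ ?_
  · simp [U_zero]
  · simp [U_one]
  · intro n h1 h2
    have e : ((n : ℤ) + 2) = ((n + 2 : ℕ) : ℤ) := by push_cast; ring
    rw [← e, U_add_two]
    push_cast at *
    simp only [sub_comp, mul_comp, X_comp, ofNat_comp, h1, h2]
    ring

private lemma T_eval_neg_one (n : ℕ) : (T ℝ (n : ℤ)).eval (-1) = (-1 : ℝ)^n := by
  have := congrArg (fun p => Polynomial.eval (1:ℝ) p) (T_comp_neg n)
  simpa [eval_comp, T_eval_one n] using this

private lemma U_eval_neg_one (n : ℕ) : (U ℝ (n : ℤ)).eval (-1) = (-1 : ℝ)^n * ((n : ℝ) + 1) := by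
  have := congrArg (fun p => Polynomial.eval (1:ℝ) p) (U_comp_neg n)
  simpa [eval_comp, U_eval_one n] using this

private lemma T_natDegree_le : ∀ n : ℕ, (T ℝ (n : ℤ)).natDegree ≤ n := by
  refine two_step ?_ ?_ ?_
  · simp [T_zero]
  · simp [T_one, natDegree_X_le]
  · intro n h1 h2
    have e : ((n : ℤ) + 2) = ((n + 2 : ℕ) : ℤ) := by push_cast; ring
    rw [← e, T_add_two]
    refine le_trans (natDegree_sub_le _ _) (max_le ?_ (le_trans h1 (by omega)))
    calc (2 * X * T ℝ ((n:ℤ)+1)).natDegree ≤ (2 * X : ℝ[X]).natDegree + (T ℝ ((n:ℤ)+1)).natDegree :=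
          natDegree_mul_le
      _ ≤ 1 + (n + 1) := by
          gcongr
          · exact le_trans natDegree_mul_le (by simp [natDegree_X_le])
          · have := h2; push_cast at this ⊢; exact_mod_cast this
      _ ≤ n + 2 := by omega

private lemma T_coeff_succ : ∀ n : ℕ, (T ℝ ((n + 1 : ℕ) : ℤ)).coeff (n + 1) = 2 ^ n := by
  refine two_step ?_ ?_ ?_
  · simp [T_one]
  · norm_num [T_two, coeff_one]
  · intro n h1 h2
    have e : (((n + 3 : ℕ)) : ℤ) = ((n + 1 : ℕ) : ℤ) + 2 := by push_cast; ring
    rw [e, T_add_two]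
    have e1 : ((n + 1 : ℕ) : ℤ) + 1 = ((n + 2 : ℕ) : ℤ) := by push_cast; ring
    rw [e1]
    have hz : (T ℝ ((n + 1 : ℕ) : ℤ)).coeff (n + 3) = 0 :=
      coeff_eq_zero_of_natDegree_lt (lt_of_le_of_lt (T_natDegree_le (n + 1)) (by omega))
    have h2' : (2 * X * T ℝ ((n + 2 : ℕ) : ℤ)).coeff (n + 3) = 2 * 2 ^ (n + 1) := by
      have : (2 * X * T ℝ ((n + 2 : ℕ) : ℤ)) = C 2 * (X * T ℝ ((n + 2 : ℕ) : ℤ)) := by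
        rw [map_ofNat]; ring
      rw [this, coeff_C_mul, coeff_X_mul, h2]
    rw [coeff_sub, h2', hz]
    ring

private lemma T_coeff_self_ne (n : ℕ) : (T ℝ (n : ℤ)).coeff n ≠ 0 := by
  cases n with
  | zero => simp [T_zero]
  | succ m => rw [T_coeff_succ m]; positivity

private lemma sq_dvd_of_root (P : ℝ[X]) (a : ℝ) (h0 : P.eval a = 0)
    (h1 : (derivative P).eval a = 0) : (X - C a) ^ 2 ∣ P := by
  obtain ⟨Q, hQ⟩ := (dvd_iff_isRoot.2 h0)
  have hQa : Q.eval a = 0 := by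
    have := congrArg (fun p => Polynomial.eval a p) (congrArg derivative hQ)
    simp [derivative_mul, eval_mul, eval_sub, h1] at this
    simpa using this.symm
  obtain ⟨R, hR⟩ := (dvd_iff_isRoot.2 hQa)
  exact ⟨R, by rw [hQ, hR]; ring⟩

private lemma one_sub_sq_dvd (P : ℝ[X]) (h0 : P.eval 1 = 0) (h1 : (derivative P).eval 1 = 0)
    (h2 : P.eval (-1) = 0) (h3 : (derivative P).eval (-1) = 0) :
    ((1 - X ^ 2 : ℝ[X]) ^ 2) ∣ P := by
  have d1 : (X - C (1:ℝ)) ^ 2 ∣ P := sq_dvd_of_root P 1 h0 h1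
  have d2 : (X - C (-1:ℝ)) ^ 2 ∣ P := sq_dvd_of_root P (-1) h2 h3
  have hcop : IsCoprime ((X - C (1:ℝ)) ^ 2) ((X - C (-1:ℝ)) ^ 2) := by
    refine IsCoprime.pow ?_
    exact Polynomial.isCoprime_X_sub_C_of_isUnit_sub (by norm_num)
  have := hcop.mul_dvd d1 d2
  have e : ((1 - X ^ 2 : ℝ[X]) ^ 2) = (X - C (1:ℝ)) ^ 2 * (X - C (-1:ℝ)) ^ 2 := by
    simp only [map_one, map_neg]
    ring
  rwa [e]

noncomputable def phiPoly (k : ℕ) : ℝ[X] :=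
  T ℝ (k : ℤ) - C (2 * ((k : ℝ) + 2) / ((k : ℝ) + 3)) * T ℝ ((k : ℤ) + 2)
    + C (((k : ℝ) + 1) / ((k : ℝ) + 3)) * T ℝ ((k : ℤ) + 4)

private lemma phiPoly_eval (k : ℕ) (x : ℝ) : (phiPoly k).eval x = phiFun k x := by
  have e2 : ((k : ℤ) + 2) = ((k + 2 : ℕ) : ℤ) := by push_cast; ring
  have e4 : ((k : ℤ) + 4) = ((k + 4 : ℕ) : ℤ) := by push_cast; ring
  simp only [phiPoly, eval_add, eval_sub, eval_mul, eval_C, phiFun, chebT, e2, e4]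

private lemma dT_eval_one (n : ℕ) : (derivative (T ℝ (n : ℤ))).eval 1 = (n : ℝ) ^ 2 := by
  cases n with
  | zero => simp [T_zero]
  | succ m =>
    rw [T_derivative_eq_U]
    have e : ((m + 1 : ℕ) : ℤ) - 1 = (m : ℤ) := by push_cast; ring
    rw [e]
    simp [U_eval_one m]
    push_cast
    ring

private lemma dT_eval_neg_one (n : ℕ) :
    (derivative (T ℝ (n : ℤ))).eval (-1) = -(-1 : ℝ) ^ n * (n : ℝ) ^ 2 := by
  cases n with
  | zero => simp [T_zero]
  | succ m =>
    rw [T_derivative_eq_U]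
    have e : ((m + 1 : ℕ) : ℤ) - 1 = (m : ℤ) := by push_cast; ring
    rw [e]
    simp [U_eval_neg_one m]
    push_cast
    ring

private lemma phiPoly_dvd (k : ℕ) : ((1 - X ^ 2 : ℝ[X]) ^ 2) ∣ phiPoly k := by
  have h3 : ((k : ℝ) + 3) ≠ 0 := by positivity
  have e2 : ((k : ℤ) + 2) = ((k + 2 : ℕ) : ℤ) := by push_cast; ring
  have e4 : ((k : ℤ) + 4) = ((k + 4 : ℕ) : ℤ) := by push_cast; ring
  refine one_sub_sq_dvd _ ?_ ?_ ?_ ?_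
  · simp only [phiPoly, e2, e4, eval_add, eval_sub, eval_mul, eval_C,
      T_eval_one k, T_eval_one (k + 2), T_eval_one (k + 4)]
    field_simp
    ring
  · simp only [phiPoly, derivative_add, derivative_sub, derivative_mul, derivative_C,
      zero_mul, zero_add, eval_add, eval_sub, eval_mul, eval_C, e2, e4,
      dT_eval_one k, dT_eval_one (k + 2), dT_eval_one (k + 4)]
    field_simp
    push_cast
    ring
  · simp only [phiPoly, e2, e4, eval_add, eval_sub, eval_mul, eval_C,
      T_eval_neg_one k, T_eval_neg_one (k + 2), T_eval_neg_one (k + 4)]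
    have : (-1 : ℝ) ^ (k + 2) = (-1) ^ k := by ring
    rw [this]
    have : (-1 : ℝ) ^ (k + 4) = (-1) ^ k := by ring
    rw [this]
    field_simp
    ring
  · simp only [phiPoly, derivative_add, derivative_sub, derivative_mul, derivative_C,
      zero_mul, zero_add, eval_add, eval_sub, eval_mul, eval_C, e2, e4,
      dT_eval_neg_one k, dT_eval_neg_one (k + 2), dT_eval_neg_one (k + 4)]
    have h1 : (-1 : ℝ) ^ (k + 2) = (-1) ^ k := by ring
    have h2 : (-1 : ℝ) ^ (k + 4) = (-1) ^ k := by ring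
    rw [h1, h2]
    field_simp
    push_cast
    ring

noncomputable def qPoly (k : ℕ) : ℝ[X] := (phiPoly_dvd k).choose

private lemma qPoly_spec (k : ℕ) : phiPoly k = (1 - X ^ 2 : ℝ[X]) ^ 2 * qPoly k :=
  (phiPoly_dvd k).choose_spec

noncomputable def Rq (q : ℝ[X]) : ℝ[X] :=
  (1 - X ^ 2) ^ 2 * derivative (derivative q) - 6 * X * (1 - X ^ 2) * derivative q
    + (6 * X ^ 2 - 3) * q

private lemma derivative_comp_negX (p : ℝ[X]) :
    derivative (p.comp (-X)) = -((derivative p).comp (-X)) := by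
  rw [Polynomial.derivative_comp]
  simp

private lemma comp_neg_flip {p : ℝ[X]} {c : ℝ} (h : p.comp (-X) = C c * p) :
    (derivative p).comp (-X) = C (-c) * derivative p := by
  have := congrArg derivative h
  rw [derivative_comp_negX, derivative_mul, derivative_C, zero_mul, zero_add] at this
  have := congrArg Neg.neg this
  simp only [neg_neg] at this
  rw [this, map_neg]
  ring

private lemma T_comp_neg' (n : ℕ) : (T ℝ (n : ℤ)).comp (-X) = C ((-1 : ℝ) ^ n) * T ℝ (n : ℤ) := by
  rw [T_comp_neg n]
  congr 1
  simp [map_pow]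

private lemma phiPoly_comp_neg (k : ℕ) :
    (phiPoly k).comp (-X) = C ((-1 : ℝ) ^ k) * phiPoly k := by
  have e2 : ((k : ℤ) + 2) = ((k + 2 : ℕ) : ℤ) := by push_cast; ring
  have e4 : ((k : ℤ) + 4) = ((k + 4 : ℕ) : ℤ) := by push_cast; ring
  have p2 : (-1 : ℝ) ^ (k + 2) = (-1) ^ k := by ring
  have p4 : (-1 : ℝ) ^ (k + 4) = (-1) ^ k := by ring
  simp only [phiPoly, e2, e4, add_comp, sub_comp, mul_comp, C_comp,
    T_comp_neg' k, T_comp_neg' (k + 2), T_comp_neg' (k + 4), p2, p4]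
  ring

private lemma one_sub_X_sq_ne : ((1 - X ^ 2 : ℝ[X]) ^ 2) ≠ 0 := by
  intro h
  have := congrArg (fun p => Polynomial.eval (0 : ℝ) p) h
  norm_num at this

private lemma qPoly_comp_neg (k : ℕ) :
    (qPoly k).comp (-X) = C ((-1 : ℝ) ^ k) * qPoly k := by
  have h := congrArg (fun p => p.comp (-X)) (qPoly_spec k)
  simp only [mul_comp, pow_comp, sub_comp, one_comp, X_comp, pow_comp] at h
  have h2 : (-X : ℝ[X]) ^ 2 = X ^ 2 := by ring
  rw [h2, phiPoly_comp_neg k, qPoly_spec k] at h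
  apply mul_left_cancel₀ one_sub_X_sq_ne
  rw [← h]
  ring

private lemma Rq_comp_neg (k : ℕ) :
    (Rq (qPoly k)).comp (-X) = C ((-1 : ℝ) ^ k) * Rq (qPoly k) := by
  have h0 := qPoly_comp_neg k
  have h1 := comp_neg_flip h0
  have h2 := comp_neg_flip h1
  simp only [neg_neg] at h2
  simp only [Rq, add_comp, sub_comp, mul_comp, pow_comp, one_comp, X_comp, ofNat_comp,
    h0, h1, h2]
  rw [map_neg]
  push_cast
  ring

private lemma P2_comp_neg (k : ℕ) :
    (derivative (derivative (phiPoly k))).comp (-X)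
      = C ((-1 : ℝ) ^ k) * derivative (derivative (phiPoly k)) := by
  have h1 := comp_neg_flip (phiPoly_comp_neg k)
  have h2 := comp_neg_flip h1
  simpa using h2

private lemma chebW_eq_mul (x : ℝ) (hx : x ∈ Set.Ioc (-1 : ℝ) 1) :
    chebW x = (1 - x) ^ (-(1 : ℝ) / 2) * (1 + x) ^ (-(1 : ℝ) / 2) := by
  rw [chebW, show (1 : ℝ) - x ^ 2 = (1 - x) * (1 + x) by ring,
    Real.mul_rpow (by nlinarith [hx.2] : (0:ℝ) ≤ 1 - x) (by nlinarith [hx.1] : (0:ℝ) ≤ 1 + x)]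

private lemma chebW_nonneg (x : ℝ) (hx : x ∈ Set.Ioc (-1 : ℝ) 1) : 0 ≤ chebW x := by
  rw [chebW_eq_mul x hx]
  exact mul_nonneg (Real.rpow_nonneg (by linarith [hx.2]) _)
    (Real.rpow_nonneg (by linarith [hx.1]) _)

private lemma chebW_le (x : ℝ) (hx : x ∈ Set.Ioc (-1 : ℝ) 1) :
    chebW x ≤ (1 - x) ^ (-(1 : ℝ) / 2) + (1 + x) ^ (-(1 : ℝ) / 2) := by
  rw [chebW_eq_mul x hx]
  rcases le_or_gt 0 x with hx0 | hx0
  · have h1 : (1 + x) ^ (-(1 : ℝ) / 2) ≤ 1 :=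
      Real.rpow_le_one_of_one_le_of_nonpos (by linarith) (by norm_num)
    have h2 : (0:ℝ) ≤ (1 - x) ^ (-(1 : ℝ) / 2) := Real.rpow_nonneg (by linarith [hx.2]) _
    nlinarith [Real.rpow_nonneg (by linarith [hx.1] : (0:ℝ) ≤ 1 + x) (-(1:ℝ)/2)]
  · have h1 : (1 - x) ^ (-(1 : ℝ) / 2) ≤ 1 :=
      Real.rpow_le_one_of_one_le_of_nonpos (by linarith) (by norm_num)
    have h2 : (0:ℝ) ≤ (1 + x) ^ (-(1 : ℝ) / 2) := Real.rpow_nonneg (by linarith [hx.1]) _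
    nlinarith [Real.rpow_nonneg (by linarith [hx.2] : (0:ℝ) ≤ 1 - x) (-(1:ℝ)/2)]

private lemma gMaj_intervalIntegrable :
    IntervalIntegrable (fun x : ℝ => (1 - x) ^ (-(1 : ℝ) / 2) + (1 + x) ^ (-(1 : ℝ) / 2))
      volume (-1) 1 := by
  have hr : (-1 : ℝ) < -(1 : ℝ) / 2 := by norm_num
  have h1 : IntervalIntegrable (fun x : ℝ => (1 - x) ^ (-(1 : ℝ) / 2)) volume (-1) 1 := by
    have h := ((intervalIntegral.intervalIntegrable_rpow' (r := -(1:ℝ)/2) (a := 0) (b := 2)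
      hr).comp_sub_left 1).symm
    have e1 : (1:ℝ) - 2 = -1 := by norm_num
    have e2 : (1:ℝ) - 0 = 1 := by norm_num
    rwa [e1, e2] at h
  have h2 : IntervalIntegrable (fun x : ℝ => (1 + x) ^ (-(1 : ℝ) / 2)) volume (-1) 1 := by
    have h := (intervalIntegral.intervalIntegrable_rpow' (r := -(1:ℝ)/2) (a := 0) (b := 2)
      hr).comp_sub_right (-1)
    have e1 : (0:ℝ) + -1 = -1 := by norm_num
    have e2 : (2:ℝ) + -1 = 1 := by norm_num
    rw [e1, e2] at h
    simp only [sub_neg_eq_add] at h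
    simpa [add_comm] using h
  exact h1.add h2

private lemma chebW_continuousOn : ContinuousOn chebW (Set.Ioo (-1 : ℝ) 1) := by
  intro x hx
  have hpos : (0:ℝ) < 1 - x ^ 2 := by nlinarith [hx.1, hx.2]
  exact (((continuous_const.sub (continuous_pow 2)).continuousAt).rpow_const
    (Or.inl (ne_of_gt hpos))).continuousWithinAt

private lemma poly_mul_chebW_integrable (P : Polynomial ℝ) :
    IntervalIntegrable (fun x => P.eval x * chebW x) volume (-1) 1 := by
  obtain ⟨M, hM⟩ := (isCompact_Icc (a := (-1:ℝ)) (b := 1)).exists_bound_of_continuousOn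
    (Continuous.continuousOn (P.continuous_aeval))
  have hM' : ∀ x ∈ Set.Icc (-1:ℝ) 1, |P.eval x| ≤ M := fun x hx => by
    simpa using hM x hx
  have hM0 : 0 ≤ M := le_trans (abs_nonneg _) (hM' 0 (by norm_num))
  have hmeas : AEStronglyMeasurable (fun x => P.eval x * chebW x)
      (volume.restrict (Set.uIoc (-1:ℝ) 1)) := by
    have huIoc : Set.uIoc (-1:ℝ) 1 = Set.Ioc (-1:ℝ) 1 := Set.uIoc_of_le (by norm_num)
    rw [huIoc, ← MeasureTheory.Measure.restrict_congr_set MeasureTheory.Ioo_ae_eq_Ioc]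
    exact (((P.continuous_aeval).continuousOn).mul chebW_continuousOn).aestronglyMeasurable
      measurableSet_Ioo
  refine IntervalIntegrable.mono_fun'
    (g := fun x => M * ((1 - x) ^ (-(1 : ℝ) / 2) + (1 + x) ^ (-(1 : ℝ) / 2)))
    (gMaj_intervalIntegrable.const_mul M) hmeas ?_
  rw [Filter.EventuallyLE, ae_restrict_iff' measurableSet_uIoc]
  refine Filter.Eventually.of_forall (fun x hx => ?_)
  have hx' : x ∈ Set.Ioc (-1:ℝ) 1 := by
    rwa [Set.uIoc_of_le (by norm_num : (-1:ℝ) ≤ 1)] at hx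
  calc ‖P.eval x * chebW x‖ = |P.eval x| * chebW x := by
        rw [Real.norm_eq_abs, abs_mul, abs_of_nonneg (chebW_nonneg x hx')]
    _ ≤ M * ((1 - x) ^ (-(1 : ℝ) / 2) + (1 + x) ^ (-(1 : ℝ) / 2)) :=
        mul_le_mul (hM' x ⟨hx'.1.le, hx'.2⟩) (chebW_le x hx') (chebW_nonneg x hx') hM0

private lemma integral_zero_of_primitive (f F : ℝ → ℝ)
    (hF : ContinuousOn F (Set.Icc (-1 : ℝ) 1))
    (hd : ∀ x ∈ Set.Ioo (-1 : ℝ) 1, HasDerivAt F (f x) x)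
    (hi : IntervalIntegrable f volume (-1) 1)
    (hv : F 1 = F (-1)) : ∫ x in (-1 : ℝ)..1, f x = 0 := by
  rw [intervalIntegral.integral_eq_sub_of_hasDerivAt_of_le (by norm_num) hF hd hi, hv, sub_self]

private lemma sqrtW_continuous (c : ℝ) (hc : 0 < c) :
    Continuous (fun x : ℝ => (1 - x ^ 2) ^ (c : ℝ)) := by
  refine Continuous.rpow_const (continuous_const.sub (continuous_pow 2)) (fun x => Or.inr hc.le)

private lemma integral_T_chebW (n : ℕ) (hn : 1 ≤ n) :
    ∫ x in (-1 : ℝ)..1, (T ℝ (n : ℤ)).eval x * chebW x = 0 := by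
  set Up : ℝ[X] := U ℝ ((n : ℤ) - 1) with hUp
  refine integral_zero_of_primitive _
    (fun x => -(1 / (n : ℝ)) * ((1 - x ^ 2) ^ ((1 : ℝ) / 2) * Up.eval x)) ?_ ?_
    (poly_mul_chebW_integrable _) ?_
  · exact (continuous_const.mul ((sqrtW_continuous _ (by norm_num)).mul
      Up.continuous_aeval)).continuousOn
  · intro x hx
    have hpos : (0 : ℝ) < 1 - x ^ 2 := by nlinarith [hx.1, hx.2]
    have hinner : HasDerivAt (fun y : ℝ => 1 - y ^ 2) (-(2 * x)) x := by
      simpa using ((hasDerivAt_pow 2 x).const_sub 1)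
    have hrpow : HasDerivAt (fun y : ℝ => (1 - y ^ 2) ^ ((1 : ℝ) / 2))
        (-(2 * x) * (1 / 2) * (1 - x ^ 2) ^ ((1 : ℝ) / 2 - 1)) x :=
      hinner.rpow_const (Or.inl (ne_of_gt hpos))
    have hU : HasDerivAt (fun y => Up.eval y) ((derivative Up).eval x) x := Up.hasDerivAt x
    have htot := ((hrpow.mul hU).const_mul (-(1 / (n : ℝ))))
    refine htot.congr_deriv (Eq.symm ?_)
    -- key identity : n * T_n = X * U_{n-1} - (1 - X^2) * U'_{n-1}
    have hkey := add_one_mul_T_eq_poly_in_U (R := ℝ) ((n : ℤ) - 1)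
    have e : ((n : ℤ) - 1) + 1 = (n : ℤ) := by ring
    rw [e] at hkey
    have hkey' := congrArg (fun p => Polynomial.eval x p) hkey
    simp only [eval_mul, eval_add, eval_sub, eval_one, eval_X, eval_pow, eval_intCast] at hkey'
    push_cast at hkey'
    -- rpow arithmetic
    have hhalf : (1 - x ^ 2) ^ ((1 : ℝ) / 2 - 1) = (1 - x ^ 2) ^ (-(1 : ℝ) / 2) := by
      norm_num
    have hsplit : (1 - x ^ 2) ^ ((1 : ℝ) / 2) = (1 - x ^ 2) * (1 - x ^ 2) ^ (-(1 : ℝ) / 2) := by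
      have h := Real.rpow_add hpos 1 (-(1 : ℝ) / 2)
      rw [Real.rpow_one] at h
      rw [show (1 : ℝ) / 2 = 1 + -(1 : ℝ) / 2 by norm_num, h]
    rw [chebW, hhalf, hsplit]
    have hn0 : (n : ℝ) ≠ 0 := by positivity
    field_simp
    linear_combination hkey'
  · norm_num [Real.zero_rpow]

private lemma integral_Tz_chebW (n : ℤ) (hn : n ≠ 0) :
    ∫ x in (-1 : ℝ)..1, (T ℝ n).eval x * chebW x = 0 := by
  rw [← T_natAbs]
  exact integral_T_chebW n.natAbs (by omega)

private lemma integral_TT_chebW (m k : ℤ) (hm : 0 ≤ m) (hk : 0 ≤ k) (hmk : m ≠ k) :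
    ∫ x in (-1 : ℝ)..1, (T ℝ m * T ℝ k).eval x * chebW x = 0 := by
  have hprod := T_mul_T (R := ℝ) m k
  have e : ∀ x : ℝ, (T ℝ m * T ℝ k).eval x * chebW x
      = (1 / 2) * ((T ℝ (m + k)).eval x * chebW x + (T ℝ (m - k)).eval x * chebW x) := by
    intro x
    have h := congrArg (fun p => Polynomial.eval x p) hprod
    simp only [eval_mul, eval_add, eval_ofNat] at h
    have h2 : (2 : ℝ) * ((T ℝ m).eval x * (T ℝ k).eval x)
        = (T ℝ (m + k)).eval x + (T ℝ (m - k)).eval x := by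
      rw [← h]; ring
    rw [eval_mul]
    linear_combination (chebW x / 2) * h2
  rw [intervalIntegral.integral_congr (fun x _ => e x),
    intervalIntegral.integral_const_mul,
    intervalIntegral.integral_add (poly_mul_chebW_integrable _) (poly_mul_chebW_integrable _),
    integral_Tz_chebW (m + k) (by omega), integral_Tz_chebW (m - k) (by omega)]
  norm_num

private lemma integral_low_mul_T (d : ℕ) : ∀ P : ℝ[X], P.natDegree ≤ d → ∀ m : ℕ, d < m →
    ∫ x in (-1 : ℝ)..1, (P * T ℝ (m : ℤ)).eval x * chebW x = 0 := by
  induction d with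
  | zero =>
    intro P hP m hm
    rw [Polynomial.eq_C_of_natDegree_le_zero hP]
    have e : ∀ x : ℝ, (C (P.coeff 0) * T ℝ (m : ℤ)).eval x * chebW x
        = P.coeff 0 * ((T ℝ (m : ℤ)).eval x * chebW x) := by
      intro x; rw [eval_mul, eval_C]; ring
    rw [intervalIntegral.integral_congr (fun x _ => e x),
      intervalIntegral.integral_const_mul, integral_T_chebW m (by omega)]
    ring
  | succ d ih =>
    intro P hP m hm
    set c : ℝ := P.coeff (d + 1) / (T ℝ ((d + 1 : ℕ) : ℤ)).coeff (d + 1) with hc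
    set P₁ : ℝ[X] := P - C c * T ℝ ((d + 1 : ℕ) : ℤ) with hP₁
    have hdeg : P₁.natDegree ≤ d := by
      rw [Polynomial.natDegree_le_iff_coeff_eq_zero]
      intro N hN
      rcases eq_or_lt_of_le (Nat.succ_le_of_lt hN) with hN1 | hN1
      · rw [hP₁, coeff_sub, coeff_C_mul, ← hN1, hc,
          div_mul_cancel₀ _ (T_coeff_self_ne (d + 1)), sub_self]
      · rw [hP₁, coeff_sub, coeff_C_mul,
          coeff_eq_zero_of_natDegree_lt (lt_of_le_of_lt hP hN1),
          coeff_eq_zero_of_natDegree_lt (lt_of_le_of_lt (T_natDegree_le (d + 1)) hN1)]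
        ring
    have hsplit : P = P₁ + C c * T ℝ ((d + 1 : ℕ) : ℤ) := by rw [hP₁]; ring
    have e : ∀ x : ℝ, (P * T ℝ (m : ℤ)).eval x * chebW x
        = (P₁ * T ℝ (m : ℤ)).eval x * chebW x
          + c * ((T ℝ ((d + 1 : ℕ) : ℤ) * T ℝ (m : ℤ)).eval x * chebW x) := by
      intro x
      rw [hsplit]
      simp only [eval_mul, eval_add, eval_C]
      ring
    rw [intervalIntegral.integral_congr (fun x _ => e x),
      intervalIntegral.integral_add (poly_mul_chebW_integrable _)
        ((poly_mul_chebW_integrable _).const_mul c),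
      intervalIntegral.integral_const_mul,
      ih P₁ hdeg m (by omega),
      integral_TT_chebW ((d + 1 : ℕ) : ℤ) (m : ℤ) (by omega) (by omega)
        (by exact_mod_cast Nat.ne_of_lt hm)]
    ring

private lemma integral_lowdeg_phi (P : ℝ[X]) (l : ℕ) (h : P.natDegree < l) :
    ∫ x in (-1 : ℝ)..1, (P * phiPoly l).eval x * chebW x = 0 := by
  have e2 : ((l : ℤ) + 2) = ((l + 2 : ℕ) : ℤ) := by push_cast; ring
  have e4 : ((l : ℤ) + 4) = ((l + 4 : ℕ) : ℤ) := by push_cast; ring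
  set a : ℝ := 2 * ((l : ℝ) + 2) / ((l : ℝ) + 3)
  set b : ℝ := ((l : ℝ) + 1) / ((l : ℝ) + 3)
  have e : ∀ x : ℝ, (P * phiPoly l).eval x * chebW x
      = (P * T ℝ (l : ℤ)).eval x * chebW x
        - a * ((P * T ℝ ((l + 2 : ℕ) : ℤ)).eval x * chebW x)
        + b * ((P * T ℝ ((l + 4 : ℕ) : ℤ)).eval x * chebW x) := by
    intro x
    simp only [phiPoly, e2, e4, eval_mul, eval_add, eval_sub, eval_C]
    ring
  rw [intervalIntegral.integral_congr (fun x _ => e x),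
    intervalIntegral.integral_add
      ((poly_mul_chebW_integrable _).sub ((poly_mul_chebW_integrable _).const_mul a))
      ((poly_mul_chebW_integrable _).const_mul b),
    intervalIntegral.integral_sub (poly_mul_chebW_integrable _)
      ((poly_mul_chebW_integrable _).const_mul a),
    intervalIntegral.integral_const_mul, intervalIntegral.integral_const_mul,
    integral_low_mul_T P.natDegree P le_rfl l h,
    integral_low_mul_T P.natDegree P le_rfl (l + 2) (by omega),
    integral_low_mul_T P.natDegree P le_rfl (l + 4) (by omega)]
  ring

private lemma dS2 : derivative ((1 - X ^ 2 : ℝ[X]) ^ 2) = -4 * X * (1 - X ^ 2) := by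
  have e : ((1 - X ^ 2 : ℝ[X]) ^ 2) = 1 - 2 * X ^ 2 + X ^ 4 := by ring
  have h2 : (C 2 : ℝ[X]) = 2 := by rw [map_ofNat]
  have h4 : (C 4 : ℝ[X]) = 4 := by rw [map_ofNat]
  rw [e]
  simp only [derivative_add, derivative_sub, derivative_one, derivative_mul, derivative_X_pow]
  simp [h2, h4]
  ring

private lemma hasDerivAt_w_phi (l : ℕ) (x : ℝ) (hx : x ∈ Set.Ioo (-1 : ℝ) 1) :
    HasDerivAt (fun y => chebW y * phiFun l y)
      ((1 - x ^ 2) ^ ((1 : ℝ) / 2)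
        * ((1 - X ^ 2) * derivative (qPoly l) - 3 * X * qPoly l).eval x) x := by
  have hfun : (fun y => chebW y * phiFun l y)
      = fun y => (1 - y ^ 2) ^ (-(1 : ℝ) / 2) * (phiPoly l).eval y := by
    funext y; rw [phiPoly_eval]; rfl
  rw [hfun]
  have hpos : (0 : ℝ) < 1 - x ^ 2 := by nlinarith [hx.1, hx.2]
  have hinner : HasDerivAt (fun y : ℝ => 1 - y ^ 2) (-(2 * x)) x := by
    simpa using ((hasDerivAt_pow 2 x).const_sub 1)
  have hrpow : HasDerivAt (fun y : ℝ => (1 - y ^ 2) ^ (-(1 : ℝ) / 2))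
      (-(2 * x) * (-(1 : ℝ) / 2) * (1 - x ^ 2) ^ (-(1 : ℝ) / 2 - 1)) x :=
    hinner.rpow_const (Or.inl (ne_of_gt hpos))
  have htot := hrpow.mul ((phiPoly l).hasDerivAt x)
  refine htot.congr_deriv (Eq.symm ?_)
  -- eval identities
  have hphi := congrArg (fun p => Polynomial.eval x p) (qPoly_spec l)
  simp only [eval_mul, eval_pow, eval_sub, eval_one, eval_X] at hphi
  have hdphi := congrArg (fun p => Polynomial.eval x p) (congrArg derivative (qPoly_spec l))
  rw [derivative_mul, dS2] at hdphi
  simp only [eval_add, eval_mul, eval_sub, eval_one, eval_X, eval_pow, eval_neg, eval_ofNat] at hdphi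
  -- rpow arithmetic
  have e1 : (1 - x ^ 2) ^ (-(1 : ℝ) / 2 - 1) * (1 - x ^ 2) ^ 2 = (1 - x ^ 2) ^ ((1 : ℝ) / 2) := by
    rw [← Real.rpow_natCast (1 - x ^ 2) 2, ← Real.rpow_add hpos]
    norm_num
  have e2 : (1 - x ^ 2) ^ (-(1 : ℝ) / 2) * (1 - x ^ 2) ^ 2
      = (1 - x ^ 2) * (1 - x ^ 2) ^ ((1 : ℝ) / 2) := by
    rw [← Real.rpow_natCast (1 - x ^ 2) 2, ← Real.rpow_add hpos, ← Real.rpow_one_add' hpos.le]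
    · norm_num
    · norm_num
  have e3 : (1 - x ^ 2) ^ (-(1 : ℝ) / 2) * (1 - x ^ 2) = (1 - x ^ 2) ^ ((1 : ℝ) / 2) := by
    nth_rewrite 2 [← Real.rpow_one (1 - x ^ 2)]
    rw [← Real.rpow_add hpos]
    norm_num
  simp only [eval_sub, eval_mul, eval_one, eval_X, eval_pow, eval_ofNat]
  linear_combination (-x * (qPoly l).eval x) * e1
    - ((derivative (qPoly l)).eval x) * e2
    + (4 * x * (qPoly l).eval x) * e3
    - ((1 - x ^ 2) ^ (-(1:ℝ) / 2 - 1) * x) * hphi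
    - ((1 - x ^ 2) ^ (-(1:ℝ) / 2)) * hdphi

private lemma d_dqP (q : ℝ[X]) :
    derivative ((1 - X ^ 2) * derivative q - 3 * X * q)
      = (1 - X ^ 2) * derivative (derivative q) - 5 * X * derivative q - 3 * q := by
  have h3 : (C 3 : ℝ[X]) = 3 := by rw [map_ofNat]
  have h2 : (C 2 : ℝ[X]) = 2 := by rw [map_ofNat]
  simp only [derivative_sub, derivative_mul, derivative_one, derivative_X, derivative_X_pow,
    derivative_ofNat]
  simp [h3, h2]
  ring

private lemma hasDerivAt_g1 (l : ℕ) (x : ℝ) (hx : x ∈ Set.Ioo (-1 : ℝ) 1) :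
    HasDerivAt (fun y => (1 - y ^ 2) ^ ((1 : ℝ) / 2)
        * ((1 - X ^ 2) * derivative (qPoly l) - 3 * X * qPoly l).eval y)
      (chebW x * (Rq (qPoly l)).eval x) x := by
  have hpos : (0 : ℝ) < 1 - x ^ 2 := by nlinarith [hx.1, hx.2]
  have hinner : HasDerivAt (fun y : ℝ => 1 - y ^ 2) (-(2 * x)) x := by
    simpa using ((hasDerivAt_pow 2 x).const_sub 1)
  have hrpow : HasDerivAt (fun y : ℝ => (1 - y ^ 2) ^ ((1 : ℝ) / 2))
      (-(2 * x) * ((1 : ℝ) / 2) * (1 - x ^ 2) ^ ((1 : ℝ) / 2 - 1)) x :=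
    hinner.rpow_const (Or.inl (ne_of_gt hpos))
  have htot := hrpow.mul (((1 - X ^ 2) * derivative (qPoly l) - 3 * X * qPoly l).hasDerivAt x)
  refine htot.congr_deriv (Eq.symm ?_)
  have f1 : (1 - x ^ 2) ^ ((1 : ℝ) / 2 - 1) = (1 - x ^ 2) ^ (-(1 : ℝ) / 2) := by norm_num
  have f2 : (1 - x ^ 2) ^ ((1 : ℝ) / 2) = (1 - x ^ 2) * (1 - x ^ 2) ^ (-(1 : ℝ) / 2) := by
    nth_rewrite 2 [← Real.rpow_one (1 - x ^ 2)]
    rw [← Real.rpow_add hpos]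
    norm_num
  have hd := congrArg (fun p => Polynomial.eval x p) (d_dqP (qPoly l))
  rw [show chebW x = (1 - x ^ 2) ^ (-(1 : ℝ) / 2) from rfl, f1, f2, hd]
  simp only [Rq, eval_add, eval_sub, eval_mul, eval_pow, eval_one, eval_X, eval_ofNat]
  ring

private lemma deriv2_w_phi (l : ℕ) (x : ℝ) (hx : x ∈ Set.Ioo (-1 : ℝ) 1) :
    deriv (deriv (fun y => chebW y * phiFun l y)) x = chebW x * (Rq (qPoly l)).eval x := by
  have hev : deriv (fun y => chebW y * phiFun l y)
      =ᶠ[nhds x] (fun y => (1 - y ^ 2) ^ ((1 : ℝ) / 2)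
        * ((1 - X ^ 2) * derivative (qPoly l) - 3 * X * qPoly l).eval y) := by
    filter_upwards [isOpen_Ioo.mem_nhds hx] with y hy
    exact (hasDerivAt_w_phi l y hy).deriv
  rw [hev.deriv_eq]
  exact (hasDerivAt_g1 l x hx).deriv

private lemma deriv2_phiFun (k : ℕ) :
    deriv (deriv (phiFun k)) = fun x => (derivative (derivative (phiPoly k))).eval x := by
  have h0 : phiFun k = fun x => (phiPoly k).eval x := by
    funext y; rw [phiPoly_eval]
  have h1 : deriv (phiFun k) = fun x => (derivative (phiPoly k)).eval x := by
    funext y; rw [h0]; exact Polynomial.deriv _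
  funext y
  rw [h1]
  exact Polynomial.deriv _

private lemma stiff_eq (l k : ℕ) :
    stiff l k = ∫ x in (-1 : ℝ)..1,
      (derivative (derivative (phiPoly k)) * Rq (qPoly l)).eval x * chebW x := by
  rw [stiff]
  apply intervalIntegral.integral_congr_ae
  have h1 : volume ({(1 : ℝ)} : Set ℝ) = 0 := measure_singleton 1
  filter_upwards [MeasureTheory.compl_mem_ae_iff.mpr h1] with x hx1 hx
  rw [Set.uIoc_of_le (by norm_num : (-1 : ℝ) ≤ 1)] at hx
  have hx' : x ∈ Set.Ioo (-1 : ℝ) 1 := ⟨hx.1, lt_of_le_of_ne hx.2 (by simpa using hx1)⟩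
  rw [deriv2_phiFun k, deriv2_w_phi l x hx', eval_mul]
  ring

private lemma dA_poly (p q : ℝ[X]) :
    derivative (p * derivative q - derivative p * q)
      = p * derivative (derivative q) - derivative (derivative p) * q := by
  simp only [derivative_sub, derivative_mul]
  ring

private lemma dB_poly (p q : ℝ[X]) :
    derivative (p * q) = derivative p * q + p * derivative q := derivative_mul

private lemma ibp_zero (p q : ℝ[X]) :
    ∫ x in (-1 : ℝ)..1,
      (p * Rq q - derivative (derivative p) * ((1 - X ^ 2) ^ 2 * q)).eval x * chebW x = 0 := by
  set A : ℝ[X] := p * derivative q - derivative p * q with hA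
  set B : ℝ[X] := p * q with hB
  refine integral_zero_of_primitive _
    (fun x => (1 - x ^ 2) ^ ((3 : ℝ) / 2) * A.eval x
      - 3 * x * ((1 - x ^ 2) ^ ((1 : ℝ) / 2) * B.eval x)) ?_ ?_
    (poly_mul_chebW_integrable _) ?_
  · refine ContinuousOn.sub ?_ ?_
    · exact (((sqrtW_continuous _ (by norm_num)).mul A.continuous_aeval)).continuousOn
    · exact ((continuous_const.mul continuous_id).mul
        ((sqrtW_continuous _ (by norm_num)).mul B.continuous_aeval)).continuousOn
  · intro x hx
    have hpos : (0 : ℝ) < 1 - x ^ 2 := by nlinarith [hx.1, hx.2]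
    have hinner : HasDerivAt (fun y : ℝ => 1 - y ^ 2) (-(2 * x)) x := by
      simpa using ((hasDerivAt_pow 2 x).const_sub 1)
    have hr32 : HasDerivAt (fun y : ℝ => (1 - y ^ 2) ^ ((3 : ℝ) / 2))
        (-(2 * x) * ((3 : ℝ) / 2) * (1 - x ^ 2) ^ ((3 : ℝ) / 2 - 1)) x :=
      hinner.rpow_const (Or.inl (ne_of_gt hpos))
    have hr12 : HasDerivAt (fun y : ℝ => (1 - y ^ 2) ^ ((1 : ℝ) / 2))
        (-(2 * x) * ((1 : ℝ) / 2) * (1 - x ^ 2) ^ ((1 : ℝ) / 2 - 1)) x :=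
      hinner.rpow_const (Or.inl (ne_of_gt hpos))
    have h3x : HasDerivAt (fun y : ℝ => 3 * y) 3 x := by
      simpa using (hasDerivAt_id x).const_mul 3
    have htot := ((hr32.mul (A.hasDerivAt x)).sub
      (h3x.mul (hr12.mul (B.hasDerivAt x))))
    refine htot.congr_deriv (Eq.symm ?_)
    simp only [Pi.mul_apply]
    have g1 : (1 - x ^ 2) ^ ((3 : ℝ) / 2 - 1) = (1 - x ^ 2) ^ ((1 : ℝ) / 2) := by norm_num
    have g3 : (1 - x ^ 2) ^ ((1 : ℝ) / 2 - 1) = (1 - x ^ 2) ^ (-(1 : ℝ) / 2) := by norm_num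
    have g2 : (1 - x ^ 2) ^ ((1 : ℝ) / 2) = (1 - x ^ 2) * (1 - x ^ 2) ^ (-(1 : ℝ) / 2) := by
      nth_rewrite 2 [← Real.rpow_one (1 - x ^ 2)]
      rw [← Real.rpow_add hpos]
      norm_num
    have g4 : (1 - x ^ 2) ^ ((3 : ℝ) / 2)
        = (1 - x ^ 2) ^ 2 * (1 - x ^ 2) ^ (-(1 : ℝ) / 2) := by
      rw [← Real.rpow_natCast (1 - x ^ 2) 2, ← Real.rpow_add hpos]
      norm_num
    have hdA := congrArg (fun r => Polynomial.eval x r) (dA_poly p q)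
    have hdB := congrArg (fun r => Polynomial.eval x r) (dB_poly p q)
    rw [show chebW x = (1 - x ^ 2) ^ (-(1 : ℝ) / 2) from rfl, g1, g3, g2, g4, hdA, hdB]
    simp only [Rq, hA, hB, eval_add, eval_sub, eval_mul, eval_pow, eval_one, eval_X, eval_ofNat]
    ring
  · norm_num [Real.zero_rpow]

private lemma ibp (p q : ℝ[X]) :
    ∫ x in (-1 : ℝ)..1, (p * Rq q).eval x * chebW x
      = ∫ x in (-1 : ℝ)..1,
          (derivative (derivative p) * ((1 - X ^ 2) ^ 2 * q)).eval x * chebW x := by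
  rw [← sub_eq_zero, ← intervalIntegral.integral_sub (poly_mul_chebW_integrable _)
    (poly_mul_chebW_integrable _)]
  rw [← ibp_zero p q]
  apply intervalIntegral.integral_congr
  intro x _
  dsimp only
  rw [eval_sub]
  ring

private lemma phiPoly_natDegree_le (k : ℕ) : (phiPoly k).natDegree ≤ k + 4 := by
  refine le_trans (natDegree_add_le _ _) (max_le ?_ ?_)
  · refine le_trans (natDegree_sub_le _ _) (max_le ?_ ?_)
    · exact le_trans (T_natDegree_le k) (by omega)
    · refine le_trans (natDegree_C_mul_le _ _) ?_
      have e2 : ((k : ℤ) + 2) = ((k + 2 : ℕ) : ℤ) := by push_cast; ring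
      rw [e2]
      exact le_trans (T_natDegree_le (k + 2)) (by omega)
  · refine le_trans (natDegree_C_mul_le _ _) ?_
    have e4 : ((k : ℤ) + 4) = ((k + 4 : ℕ) : ℤ) := by push_cast; ring
    rw [e4]
    exact T_natDegree_le (k + 4)

private lemma P4_natDegree_le (k : ℕ) :
    (derivative (derivative (derivative (derivative (phiPoly k))))).natDegree ≤ k := by
  have h0 := phiPoly_natDegree_le k
  have h1 := natDegree_derivative_le (phiPoly k)
  have h2 := natDegree_derivative_le (derivative (phiPoly k))
  have h3 := natDegree_derivative_le (derivative (derivative (phiPoly k)))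
  have h4 := natDegree_derivative_le (derivative (derivative (derivative (phiPoly k))))
  omega


/-- The stiffness entry `F_{lk}` vanishes whenever `k < l` or `k - l` is odd; i.e. the
only possibly nonzero entries occur for `k = l, l+2, l+4, …`. -/
theorem stiff_vanishes (l k : ℕ) (h : (k : ℤ) < (l : ℤ) ∨ Odd ((k : ℤ) - (l : ℤ))) :
    stiff l k = 0 := by
  rcases h with hlt | hodd
  · -- case k < l : integration by parts and orthogonality
    rw [stiff_eq l k, ibp (derivative (derivative (phiPoly k))) (qPoly l), ← qPoly_spec l]
    exact integral_lowdeg_phi _ l (lt_of_le_of_lt (P4_natDegree_le k) (by exact_mod_cast hlt))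
  · -- parity case
    rw [stiff_eq l k]
    set W : ℝ[X] := derivative (derivative (phiPoly k)) * Rq (qPoly l) with hW
    have hpar : W.comp (-X) = C ((-1 : ℝ) ^ (k + l)) * W := by
      rw [hW, mul_comp, P2_comp_neg k, Rq_comp_neg l, pow_add, map_mul]
      ring
    have hodd' : Odd (k + l) := by
      rcases Int.even_or_odd ((l : ℤ)) with he | ho
      · have : Odd (k : ℤ) := by
          rcases Int.even_or_odd ((k : ℤ)) with he2 | ho2
          · exfalso
            have : Even ((k : ℤ) - (l : ℤ)) := he2.sub he
            exact (Int.not_odd_iff_even.mpr this) hodd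
          · exact ho2
        have hk : Odd k := by rwa [Int.odd_coe_nat] at this
        have hl : Even l := by rwa [Int.even_coe_nat] at he
        exact Odd.add_even hk hl
      · have : Even (k : ℤ) := by
          rcases Int.even_or_odd ((k : ℤ)) with he2 | ho2
          · exact he2
          · exfalso
            have : Even ((k : ℤ) - (l : ℤ)) := ho2.sub_odd ho
            exact (Int.not_odd_iff_even.mpr this) hodd
        have hk : Even k := by rwa [Int.even_coe_nat] at this
        have hl : Odd l := by rwa [Int.odd_coe_nat] at ho
        exact Even.add_odd hk hl
    have hsign : ((-1 : ℝ) ^ (k + l)) = -1 := hodd'.neg_one_pow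
    rw [hsign] at hpar
    -- odd integrand
    have hW' : ∀ x : ℝ, W.eval (-x) * chebW (-x) = -(W.eval x * chebW x) := by
      intro x
      have h1 : W.eval (-x) = -W.eval x := by
        have := congrArg (fun p => Polynomial.eval x p) hpar
        rw [eval_comp] at this
        simp only [eval_neg, eval_X, eval_mul, eval_C] at this
        rw [this]; ring
      have h2 : chebW (-x) = chebW x := by
        rw [chebW, chebW, neg_pow]
        norm_num
      rw [h1, h2]; ring
    have hci := intervalIntegral.integral_comp_neg (a := (-1 : ℝ)) (b := 1)
      (f := fun x => W.eval x * chebW x)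
    simp only [neg_neg] at hci
    have : ∫ x in (-1 : ℝ)..1, W.eval x * chebW x
        = -∫ x in (-1 : ℝ)..1, W.eval x * chebW x := by
      nth_rewrite 1 [← hci]
      rw [← intervalIntegral.integral_neg]
      apply intervalIntegral.integral_congr
      intro x _
      exact hW' x
    linarith [this]
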